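/- Let (Ω, F, ℙ) be a probability space, T > 0, ε > 0, and let δ : [0, T] × Ω → ℝ be jointly measurable with δ_s ≥ ε almost surely for every s ∈ [0, T] and E[∫₀ᵀ δ_s² ds] < ∞. Let δ₀ ≥ ε be a constant with E[|δ_s² − δ₀²|] → 0 as s → 0⁺, and let L be a nonnegative square-integrable random variable on Ω. Then E[ sqrt( (1/t) ∫₀ᵗ δ_s² ds ) · L ] → δ₀ E[L] as t → 0⁺. -/

import Mathlib

open MeasureTheory Filter Topology Function
open scoped ENNReal

/-- For `a ≥ 0`, `b ≥ 0`, `(√a - b)² ≤ |a - b²|`. -/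
lemma sqrt_sub_sq_le_abs' {a b : ℝ} (ha : 0 ≤ a) (hb : 0 ≤ b) :
    (Real.sqrt a - b) ^ 2 ≤ |a - b ^ 2| := by
  set s := Real.sqrt a with hs
  have hs0 : 0 ≤ s := Real.sqrt_nonneg a
  have hsq : s ^ 2 = a := Real.sq_sqrt ha
  have h1 : |s - b| ≤ s + b := abs_le.2 ⟨by linarith, by linarith⟩
  calc (s - b) ^ 2 = |s - b| * |s - b| := by rw [abs_mul_abs_self]; ring
    _ ≤ |s - b| * (s + b) := mul_le_mul_of_nonneg_left h1 (abs_nonneg _)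
    _ = |(s - b) * (s + b)| := by
        rw [abs_mul, abs_of_nonneg (show (0:ℝ) ≤ s + b by linarith)]
    _ = |s ^ 2 - b ^ 2| := by congr 1; ring
    _ = |a - b ^ 2| := by rw [hsq]

/-- If `δ : [0,T] × Ω → ℝ` is jointly measurable, `δ_s ≥ ε > 0` a.s.
for every `s ∈ [0,T]`, `E[∫₀ᵀ δ_s² ds] < ∞`, `δ₀ ≥ ε` is a constant with
`E[|δ_s² − δ₀²|] → 0` as `s → 0⁺`, and `L ≥ 0` is square-integrable, then
`E[ √((1/t) ∫₀ᵗ δ_s² ds) · L ] → δ₀ E[L]` as `t → 0⁺`. -/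
theorem tendsto_integral_sqrt_average_mul
    {Ω : Type*} [MeasurableSpace Ω] (P : Measure Ω) [IsProbabilityMeasure P]
    {T ε : ℝ} (hT : 0 < T) (hε : 0 < ε)
    (δ : ℝ → Ω → ℝ) (hδ_meas : Measurable (Function.uncurry δ))
    (hδ_ge : ∀ s ∈ Set.Icc (0:ℝ) T, ∀ᵐ ω ∂P, ε ≤ δ s ω)
    (hδ_int : ∫⁻ ω, (∫⁻ s in Set.Ioc (0:ℝ) T, ENNReal.ofReal ((δ s ω) ^ 2)) ∂P < ⊤)
    (δ0 : ℝ) (hδ0 : ε ≤ δ0)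
    (hconv : Tendsto (fun s => ∫ ω, |(δ s ω) ^ 2 - δ0 ^ 2| ∂P) (𝓝[>] 0) (𝓝 0))
    (L : Ω → ℝ) (hL_nonneg : ∀ᵐ ω ∂P, 0 ≤ L ω) (hL2 : MemLp L 2 P) :
    Tendsto (fun t => ∫ ω, Real.sqrt ((1 / t) * ∫ s in (0:ℝ)..t, (δ s ω) ^ 2) * L ω ∂P)
      (𝓝[>] 0) (𝓝 (δ0 * ∫ ω, L ω ∂P)) := by
  have hδ00 : 0 ≤ δ0 := le_trans hε.le hδ0
  -- basic measurability
  have hprod : Measurable (fun p : ℝ × Ω => ENNReal.ofReal ((δ p.1 p.2) ^ 2)) :=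
    (hδ_meas.pow_const 2).ennreal_ofReal
  have habs : Measurable (fun p : ℝ × Ω => ENNReal.ofReal |(δ p.1 p.2) ^ 2 - δ0 ^ 2|) :=
    (((hδ_meas.pow_const 2).sub measurable_const).abs).ennreal_ofReal
  have hδmω : ∀ ω, Measurable fun s => (δ s ω) ^ 2 := fun ω =>
    (hδ_meas.comp (measurable_id.prodMk measurable_const)).pow_const 2
  have hδms : ∀ s, Measurable fun ω => (δ s ω) ^ 2 := fun s =>
    (hδ_meas.comp (measurable_const.prodMk measurable_id)).pow_const 2
  -- a.e. s : ω-integrability and identification of the L¹-distance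
  have hswapT : ∫⁻ s in Set.Ioc (0:ℝ) T, (∫⁻ ω, ENNReal.ofReal ((δ s ω) ^ 2) ∂P)
      = ∫⁻ ω, (∫⁻ s in Set.Ioc (0:ℝ) T, ENNReal.ofReal ((δ s ω) ^ 2)) ∂P :=
    lintegral_lintegral_swap hprod.aemeasurable
  have hs_fin : ∀ᵐ s ∂(volume.restrict (Set.Ioc (0:ℝ) T)),
      (∫⁻ ω, ENNReal.ofReal ((δ s ω) ^ 2) ∂P) < ⊤ := by
    refine ae_lt_top hprod.lintegral_prod_right' ?_
    rw [hswapT]; exact hδ_int.ne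
  have hInt_s : ∀ᵐ s ∂(volume.restrict (Set.Ioc (0:ℝ) T)),
      Integrable (fun ω => |(δ s ω) ^ 2 - δ0 ^ 2|) P := by
    filter_upwards [hs_fin] with s hs
    have hint : Integrable (fun ω => (δ s ω) ^ 2) P := by
      refine ⟨(hδms s).aestronglyMeasurable, ?_⟩
      rw [hasFiniteIntegral_iff_ofReal (Eventually.of_forall fun ω => sq_nonneg _)]
      exact hs
    exact (hint.sub (integrable_const _)).abs
  have hg_ae : ∀ᵐ s ∂(volume.restrict (Set.Ioc (0:ℝ) T)),
      (∫⁻ ω, ENNReal.ofReal |(δ s ω) ^ 2 - δ0 ^ 2| ∂P)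
        = ENNReal.ofReal (∫ ω, |(δ s ω) ^ 2 - δ0 ^ 2| ∂P) := by
    filter_upwards [hInt_s] with s hs
    exact (ofReal_integral_eq_lintegral_ofReal hs
      (Eventually.of_forall fun ω => abs_nonneg _)).symm
  -- a.e. ω : pathwise integrability on (0, T]
  have hω_fin : ∀ᵐ ω ∂P, (∫⁻ s in Set.Ioc (0:ℝ) T, ENNReal.ofReal ((δ s ω) ^ 2)) < ⊤ :=
    ae_lt_top (hprod.comp measurable_swap).lintegral_prod_right' hδ_int.ne
  have hω_int : ∀ᵐ ω ∂P, IntegrableOn (fun s => (δ s ω) ^ 2) (Set.Ioc (0:ℝ) T) := by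
    filter_upwards [hω_fin] with ω hω
    refine ⟨(hδmω ω).aestronglyMeasurable, ?_⟩
    rw [hasFiniteIntegral_iff_ofReal (Eventually.of_forall fun s => sq_nonneg _)]
    exact hω
  -- the L² constant
  set C : ℝ≥0∞ := (∫⁻ ω, (ENNReal.ofReal (L ω)) ^ (2:ℝ) ∂P) ^ (1/2:ℝ) with hC_def
  have hC_lt : C < ⊤ := by
    have hle : C ≤ eLpNorm L 2 P := by
      rw [eLpNorm_eq_lintegral_rpow_enorm_toReal (by norm_num) (by norm_num)]
      simp only [ENNReal.toReal_ofNat]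
      refine ENNReal.rpow_le_rpow (lintegral_mono fun ω => ?_) (by norm_num)
      exact ENNReal.rpow_le_rpow (Real.ofReal_le_enorm _) (by norm_num)
    exact lt_of_le_of_lt hle hL2.2
  -- ε-δ argument
  rw [Metric.tendsto_nhds]
  intro η' hη'
  set c : ℝ := C.toReal with hc_def
  have hc0 : 0 ≤ c := ENNReal.toReal_nonneg
  set η : ℝ := (η' / (2 * (c + 1))) ^ 2 with hη_def
  have hη : 0 < η := by positivity
  obtain ⟨s₀, hs₀pos, hsub⟩ := mem_nhdsGT_iff_exists_Ioo_subset.1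
    (hconv (Iio_mem_nhds hη))
  set m : ℝ := min s₀ T with hm_def
  have hm_pos : 0 < m := lt_min hs₀pos hT
  filter_upwards [Ioo_mem_nhdsGT_of_mem (Set.left_mem_Ico.2 hm_pos)] with t ht
  obtain ⟨ht0, htm⟩ := ht
  have htT : t ≤ T := le_of_lt (lt_of_lt_of_le htm (min_le_right _ _))
  have hts₀ : t < s₀ := lt_of_lt_of_le htm (min_le_left _ _)
  -- replace interval integrals by set integrals over Ioc 0 t
  simp only [intervalIntegral.integral_of_le ht0.le]
  set A : Ω → ℝ := fun ω => (1 / t) * ∫ s in Set.Ioc (0:ℝ) t, (δ s ω) ^ 2 with hA_def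
  have hA_sm : StronglyMeasurable A := by
    refine stronglyMeasurable_const.mul ?_
    exact StronglyMeasurable.integral_prod_left
      ((hδ_meas.pow_const 2).stronglyMeasurable)
  -- key pointwise bound
  have key : ∀ᵐ ω ∂P, ENNReal.ofReal ((Real.sqrt (A ω) - δ0) ^ 2)
      ≤ ENNReal.ofReal (1 / t) *
        ∫⁻ s in Set.Ioc (0:ℝ) t, ENNReal.ofReal |(δ s ω) ^ 2 - δ0 ^ 2| := by
    filter_upwards [hω_int] with ω hω
    have hI : IntegrableOn (fun s => (δ s ω) ^ 2) (Set.Ioc (0:ℝ) t) :=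
      hω.mono_set (Set.Ioc_subset_Ioc_right htT)
    have hIc : IntegrableOn (fun _ : ℝ => δ0 ^ 2) (Set.Ioc (0:ℝ) t) :=
      integrableOn_const measure_Ioc_lt_top.ne
    have hIabs : IntegrableOn (fun s => |(δ s ω) ^ 2 - δ0 ^ 2|) (Set.Ioc (0:ℝ) t) :=
      (hI.sub hIc).abs
    have hInonneg : 0 ≤ ∫ s in Set.Ioc (0:ℝ) t, (δ s ω) ^ 2 :=
      setIntegral_nonneg measurableSet_Ioc fun s _ => sq_nonneg _
    have hA0 : 0 ≤ A ω := mul_nonneg (by positivity) hInonneg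
    have heq : A ω - δ0 ^ 2 = (1 / t) * ∫ s in Set.Ioc (0:ℝ) t, ((δ s ω) ^ 2 - δ0 ^ 2) := by
      rw [integral_sub hI hIc, setIntegral_const, measureReal_def, Real.volume_Ioc, sub_zero,
        ENNReal.toReal_ofReal ht0.le, hA_def, smul_eq_mul]
      field_simp
    have hb : |A ω - δ0 ^ 2| ≤ (1 / t) * ∫ s in Set.Ioc (0:ℝ) t, |(δ s ω) ^ 2 - δ0 ^ 2| := by
      rw [heq, abs_mul, abs_of_nonneg (by positivity : (0:ℝ) ≤ 1 / t)]
      refine mul_le_mul_of_nonneg_left ?_ (by positivity)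
      calc |∫ s in Set.Ioc (0:ℝ) t, ((δ s ω) ^ 2 - δ0 ^ 2)|
          = ‖∫ s in Set.Ioc (0:ℝ) t, ((δ s ω) ^ 2 - δ0 ^ 2)‖ := (Real.norm_eq_abs _).symm
        _ ≤ ∫ s in Set.Ioc (0:ℝ) t, ‖(δ s ω) ^ 2 - δ0 ^ 2‖ := norm_integral_le_integral_norm _
        _ = ∫ s in Set.Ioc (0:ℝ) t, |(δ s ω) ^ 2 - δ0 ^ 2| := by
            simp only [Real.norm_eq_abs]
    have hsq : (Real.sqrt (A ω) - δ0) ^ 2 ≤ |A ω - δ0 ^ 2| := sqrt_sub_sq_le_abs' hA0 hδ00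
    calc ENNReal.ofReal ((Real.sqrt (A ω) - δ0) ^ 2)
        ≤ ENNReal.ofReal ((1 / t) * ∫ s in Set.Ioc (0:ℝ) t, |(δ s ω) ^ 2 - δ0 ^ 2|) :=
          ENNReal.ofReal_le_ofReal (hsq.trans hb)
      _ = ENNReal.ofReal (1 / t) *
            ENNReal.ofReal (∫ s in Set.Ioc (0:ℝ) t, |(δ s ω) ^ 2 - δ0 ^ 2|) :=
          ENNReal.ofReal_mul (by positivity)
      _ = ENNReal.ofReal (1 / t) *
            ∫⁻ s in Set.Ioc (0:ℝ) t, ENNReal.ofReal |(δ s ω) ^ 2 - δ0 ^ 2| := by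
          rw [ofReal_integral_eq_lintegral_ofReal hIabs
            (Eventually.of_forall fun s => abs_nonneg _)]
  -- integrate the key bound
  have h1 : ∫⁻ ω, ENNReal.ofReal ((Real.sqrt (A ω) - δ0) ^ 2) ∂P ≤ ENNReal.ofReal η := by
    have hswapt : ∫⁻ ω, (∫⁻ s in Set.Ioc (0:ℝ) t, ENNReal.ofReal |(δ s ω) ^ 2 - δ0 ^ 2|) ∂P
        = ∫⁻ s in Set.Ioc (0:ℝ) t, (∫⁻ ω, ENNReal.ofReal |(δ s ω) ^ 2 - δ0 ^ 2| ∂P) :=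
      lintegral_lintegral_swap (habs.comp measurable_swap).aemeasurable
    have hgle : ∀ᵐ s ∂(volume.restrict (Set.Ioc (0:ℝ) t)),
        (∫⁻ ω, ENNReal.ofReal |(δ s ω) ^ 2 - δ0 ^ 2| ∂P) ≤ ENNReal.ofReal η := by
      have h' := ae_restrict_of_ae_restrict_of_subset (Set.Ioc_subset_Ioc_right htT) hg_ae
      filter_upwards [h', ae_restrict_mem measurableSet_Ioc] with s hseq hsmem
      rw [hseq]
      exact ENNReal.ofReal_le_ofReal
        (le_of_lt (hsub ⟨hsmem.1, lt_of_le_of_lt hsmem.2 hts₀⟩))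
    calc ∫⁻ ω, ENNReal.ofReal ((Real.sqrt (A ω) - δ0) ^ 2) ∂P
        ≤ ∫⁻ ω, ENNReal.ofReal (1 / t) *
            (∫⁻ s in Set.Ioc (0:ℝ) t, ENNReal.ofReal |(δ s ω) ^ 2 - δ0 ^ 2|) ∂P :=
          lintegral_mono_ae key
      _ = ENNReal.ofReal (1 / t) *
            ∫⁻ ω, (∫⁻ s in Set.Ioc (0:ℝ) t, ENNReal.ofReal |(δ s ω) ^ 2 - δ0 ^ 2|) ∂P :=
          lintegral_const_mul' _ _ ENNReal.ofReal_ne_top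
      _ = ENNReal.ofReal (1 / t) *
            ∫⁻ s in Set.Ioc (0:ℝ) t, (∫⁻ ω, ENNReal.ofReal |(δ s ω) ^ 2 - δ0 ^ 2| ∂P) := by
          rw [hswapt]
      _ ≤ ENNReal.ofReal (1 / t) * (ENNReal.ofReal η * volume (Set.Ioc (0:ℝ) t)) := by
          refine mul_le_mul_right ?_ _
          calc ∫⁻ s in Set.Ioc (0:ℝ) t, (∫⁻ ω, ENNReal.ofReal |(δ s ω) ^ 2 - δ0 ^ 2| ∂P)
              ≤ ∫⁻ _ in Set.Ioc (0:ℝ) t, ENNReal.ofReal η := lintegral_mono_ae hgle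
            _ = ENNReal.ofReal η * volume (Set.Ioc (0:ℝ) t) := by
                rw [setLIntegral_const]
      _ = ENNReal.ofReal η := by
          rw [Real.volume_Ioc, sub_zero, ← ENNReal.ofReal_mul (by positivity : (0:ℝ) ≤ η),
            ← ENNReal.ofReal_mul (by positivity : (0:ℝ) ≤ 1 / t)]
          congr 1
          field_simp
  -- Cauchy–Schwarz
  set f : Ω → ℝ≥0∞ := fun ω => ENNReal.ofReal |Real.sqrt (A ω) - δ0| with hf_def
  set gL : Ω → ℝ≥0∞ := fun ω => ENNReal.ofReal (L ω) with hgL_def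
  have hf_meas : AEMeasurable f P :=
    (((hA_sm.measurable.sqrt.sub measurable_const).abs).ennreal_ofReal).aemeasurable
  have hgL_meas : AEMeasurable gL P := hL2.1.aemeasurable.ennreal_ofReal
  have hf2 : ∀ ω, f ω ^ (2:ℝ) = ENNReal.ofReal ((Real.sqrt (A ω) - δ0) ^ 2) := by
    intro ω
    rw [hf_def, ENNReal.ofReal_rpow_of_nonneg (abs_nonneg _) (by norm_num)]
    congr 1
    rw [show (2:ℝ) = ((2:ℕ):ℝ) by norm_num, Real.rpow_natCast, sq_abs]
  have hCS : ∫⁻ ω, ENNReal.ofReal (|Real.sqrt (A ω) - δ0| * L ω) ∂P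
      ≤ ENNReal.ofReal η ^ (1/2:ℝ) * C := by
    have h2 : Real.HolderConjugate 2 2 := Real.holderConjugate_iff.2 ⟨one_lt_two, by norm_num⟩
    calc ∫⁻ ω, ENNReal.ofReal (|Real.sqrt (A ω) - δ0| * L ω) ∂P
        = ∫⁻ ω, (f * gL) ω ∂P := by
          simp only [Pi.mul_apply, hf_def, hgL_def,
            ENNReal.ofReal_mul (abs_nonneg (Real.sqrt (A _) - δ0))]
      _ ≤ (∫⁻ ω, f ω ^ (2:ℝ) ∂P) ^ (1/2:ℝ) * (∫⁻ ω, gL ω ^ (2:ℝ) ∂P) ^ (1/2:ℝ) :=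
          ENNReal.lintegral_mul_le_Lp_mul_Lq P h2 hf_meas hgL_meas
      _ ≤ ENNReal.ofReal η ^ (1/2:ℝ) * C := by
          rw [hC_def]
          refine mul_le_mul_left (ENNReal.rpow_le_rpow ?_ (by norm_num)) _
          calc ∫⁻ ω, f ω ^ (2:ℝ) ∂P
              = ∫⁻ ω, ENNReal.ofReal ((Real.sqrt (A ω) - δ0) ^ 2) ∂P := by
                simp only [hf2]
            _ ≤ ENNReal.ofReal η := h1
  have hRHS_lt : ENNReal.ofReal η ^ (1/2:ℝ) * C < ⊤ :=
    ENNReal.mul_lt_top (ENNReal.rpow_lt_top_of_nonneg (by norm_num) ENNReal.ofReal_ne_top)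
      hC_lt
  -- integrability of the centered product
  have habs_ae : ∀ᵐ ω ∂P, |(Real.sqrt (A ω) - δ0) * L ω|
      = |Real.sqrt (A ω) - δ0| * L ω := by
    filter_upwards [hL_nonneg] with ω hω
    rw [abs_mul, abs_of_nonneg hω]
  have hdiff_sm : AEStronglyMeasurable (fun ω => (Real.sqrt (A ω) - δ0) * L ω) P :=
    ((hA_sm.measurable.sqrt.sub measurable_const).aestronglyMeasurable).mul hL2.1
  have hlin_eq : ∫⁻ ω, ‖(Real.sqrt (A ω) - δ0) * L ω‖ₑ ∂P
      = ∫⁻ ω, ENNReal.ofReal (|Real.sqrt (A ω) - δ0| * L ω) ∂P := by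
    refine lintegral_congr_ae ?_
    filter_upwards [habs_ae] with ω hω
    rw [Real.enorm_eq_ofReal_abs, hω]
  have hInt_diff : Integrable (fun ω => (Real.sqrt (A ω) - δ0) * L ω) P := by
    refine ⟨hdiff_sm, ?_⟩
    rw [hasFiniteIntegral_def, hlin_eq]
    exact lt_of_le_of_lt hCS hRHS_lt
  have hL_int : Integrable L P := hL2.integrable one_le_two
  have hInt_dL : Integrable (fun ω => δ0 * L ω) P := hL_int.const_mul δ0
  -- split the integral
  have hsplit : ∫ ω, Real.sqrt (A ω) * L ω ∂P
      = (∫ ω, (Real.sqrt (A ω) - δ0) * L ω ∂P) + δ0 * ∫ ω, L ω ∂P := by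
    rw [← integral_const_mul δ0, ← integral_add hInt_diff hInt_dL]
    congr 1
    funext ω
    ring
  -- final estimate
  have hbound : |∫ ω, (Real.sqrt (A ω) - δ0) * L ω ∂P| ≤ η ^ (1/2:ℝ) * c := by
    have h3 : |∫ ω, (Real.sqrt (A ω) - δ0) * L ω ∂P|
        ≤ ∫ ω, |(Real.sqrt (A ω) - δ0) * L ω| ∂P := by
      rw [← Real.norm_eq_abs]
      exact (norm_integral_le_integral_norm _).trans (le_of_eq (by
        simp only [Real.norm_eq_abs]))
    refine h3.trans ?_
    have h4 : ∫ ω, |(Real.sqrt (A ω) - δ0) * L ω| ∂P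
        = (∫⁻ ω, ENNReal.ofReal (|Real.sqrt (A ω) - δ0| * L ω) ∂P).toReal := by
      have habs_sm : AEStronglyMeasurable (fun ω => |(Real.sqrt (A ω) - δ0) * L ω|) P := by
        simpa only [Real.norm_eq_abs] using hdiff_sm.norm
      rw [integral_eq_lintegral_of_nonneg_ae (Eventually.of_forall fun ω => abs_nonneg _)
        habs_sm]
      congr 1
      refine lintegral_congr_ae ?_
      filter_upwards [habs_ae] with ω hω
      rw [hω]
    rw [h4]
    have h5 := ENNReal.toReal_mono hRHS_lt.ne hCS
    refine h5.trans (le_of_eq ?_)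
    rw [ENNReal.toReal_mul, ← ENNReal.toReal_rpow, ENNReal.toReal_ofReal hη.le, hc_def]
  have hfinal : η ^ (1/2:ℝ) * c < η' := by
    have hsqrt : η ^ (1/2:ℝ) = η' / (2 * (c + 1)) := by
      rw [hη_def, ← Real.sqrt_eq_rpow, Real.sqrt_sq (by positivity)]
    rw [hsqrt]
    rw [div_mul_eq_mul_div, div_lt_iff₀ (by positivity)]
    nlinarith
  -- conclude
  rw [Real.dist_eq, hsplit]
  calc |∫ ω, (Real.sqrt (A ω) - δ0) * L ω ∂P + δ0 * ∫ ω, L ω ∂P - δ0 * ∫ ω, L ω ∂P|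
      = |∫ ω, (Real.sqrt (A ω) - δ0) * L ω ∂P| := by rw [add_sub_cancel_right]
    _ ≤ η ^ (1/2:ℝ) * c := hbound
    _ < η' := hfinal
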